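/- There exists a probability distribution over deterministic assignments of 3 objects to 3 agents that satisfies decomposition envy-freeness (every agent envies every other agent with probability at most 1/2), yet whose induced assignment matrix violates weak SD-envy-freeness. Concretely, with preferences a≻_1 b≻_1 c, b≻_2 c≻_2 a, c≻_3 a≻_3 b, the distribution putting probability 1/2 each on assignments (1:a,2:b,3:c) and (1:c,2:a,3:b) works. -/

import Mathlib

/-- A doubly stochastic assignment matrix: nonnegative entries, each row and column sums to 1. -/
def DoublyStochastic (n : ℕ) (P : Fin n → Fin n → ℝ) : Prop :=
  (∀ i o, 0 ≤ P i o) ∧ (∀ i, ∑ o, P i o = 1) ∧ (∀ o, ∑ i, P i o = 1)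

/-- SD-envy-freeness: `rank i o` is the position of object `o` in agent `i`'s strict
preference (smaller = more preferred). For all agents `i, i'` and objects `o`, the mass agent
`i` gets on objects weakly preferred (by `i`) to `o` is at least the mass `i'` gets there. -/
def SDEF (n : ℕ) (rank : Fin n → Equiv.Perm (Fin n)) (P : Fin n → Fin n → ℝ) : Prop :=
  ∀ i i' o : Fin n,
    ∑ o' ∈ Finset.univ.filter (fun o' => rank i o' ≤ rank i o), P i' o' ≤
    ∑ o' ∈ Finset.univ.filter (fun o' => rank i o' ≤ rank i o), P i o'

/-- A decomposition of an assignment matrix: a probability distribution over deterministic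
assignments (permutations `σ`, where `σ i` is the object of agent `i`) whose marginals are `P`. -/
def IsDecomposition (n : ℕ) (P : Fin n → Fin n → ℝ) (w : Equiv.Perm (Fin n) → ℝ) : Prop :=
  (∀ σ, 0 ≤ w σ) ∧ (∑ σ, w σ = 1) ∧
  ∀ i o, ∑ σ ∈ Finset.univ.filter (fun σ : Equiv.Perm (Fin n) => σ i = o), w σ = P i o

/-- The probability, under the distribution `w` over deterministic assignments, that agent `i`
envies agent `i'` (i.e. strictly prefers `i'`'s object to her own). -/
def envyProb (n : ℕ) (rank : Fin n → Equiv.Perm (Fin n)) (w : Equiv.Perm (Fin n) → ℝ)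
    (i i' : Fin n) : ℝ :=
  ∑ σ ∈ Finset.univ.filter (fun σ : Equiv.Perm (Fin n) => rank i (σ i') < rank i (σ i)), w σ

/-- `SDdom n e X Y`: X stochastically dominates Y w.r.t. the preference with rank `e`. -/
def SDdom (n : ℕ) (e : Equiv.Perm (Fin n)) (X Y : Fin n → ℝ) : Prop :=
  ∀ o : Fin n, ∑ o' ∈ Finset.univ.filter (fun o' => e o' ≤ e o), Y o' ≤
    ∑ o' ∈ Finset.univ.filter (fun o' => e o' ≤ e o), X o'

/-- Weak SD-envy-freeness of an assignment matrix. -/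
def WeakSDEF (n : ℕ) (rank : Fin n → Equiv.Perm (Fin n)) (P : Fin n → Fin n → ℝ) : Prop :=
  ∀ i i' : Fin n, (∀ o, P i o = P i' o) ∨ ¬ SDdom n (rank i) (P i') (P i)


lemma sum_w_eval (s : Finset (Equiv.Perm (Fin 3))) :
    ∑ σ ∈ s, (if σ = Equiv.refl (Fin 3) then (1:ℝ) / 2
      else if σ = ((Equiv.swap 0 1).trans (Equiv.swap 0 2)).symm then 1 / 2 else 0)
    = (if Equiv.refl (Fin 3) ∈ s then (1:ℝ)/2 else 0)
      + (if ((Equiv.swap 0 1).trans (Equiv.swap 0 2)).symm ∈ s then (1:ℝ)/2 else 0) := by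
  have hne : Equiv.refl (Fin 3) ≠ ((Equiv.swap 0 1).trans (Equiv.swap 0 2)).symm := by decide
  rw [show (fun σ : Equiv.Perm (Fin 3) => (if σ = Equiv.refl (Fin 3) then (1:ℝ) / 2
      else if σ = ((Equiv.swap 0 1).trans (Equiv.swap 0 2)).symm then 1 / 2 else 0))
    = fun σ => (if σ = Equiv.refl (Fin 3) then (1:ℝ)/2 else 0)
      + (if σ = ((Equiv.swap 0 1).trans (Equiv.swap 0 2)).symm then (1:ℝ)/2 else 0) from ?_]
  · rw [Finset.sum_add_distrib, Finset.sum_ite_eq' s, Finset.sum_ite_eq' s]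
  · funext σ
    by_cases h1 : σ = Equiv.refl (Fin 3)
    · subst h1; simp [hne]; decide
    · simp [h1]

lemma ite_half_le (c0 c1 : Prop) [Decidable c0] [Decidable c1] (h : ¬ c0) :
    ((if c0 then (1:ℝ)/2 else 0) + (if c1 then (1:ℝ)/2 else 0)) ≤ 1/2 := by
  rw [if_neg h]; split <;> norm_num

/-- Example 3: with preferences a≻₁b≻₁c, b≻₂c≻₂a, c≻₃a≻₃b, the distribution
putting probability 1/2 on each of the assignments (1:a,2:b,3:c) (the identity) and
(1:c,2:a,3:b) is a probability distribution satisfying Dec-EF (each agent envies each other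
agent with probability at most 1/2), yet its induced assignment matrix violates weak SD-EF. -/
theorem dec_ef_not_weak_sdef :
    let rank : Fin 3 → Equiv.Perm (Fin 3) :=
      ![Equiv.refl (Fin 3), ((Equiv.swap 0 1).trans (Equiv.swap 0 2)).symm,
        (Equiv.swap 0 1).trans (Equiv.swap 0 2)]
    let w : Equiv.Perm (Fin 3) → ℝ := fun σ =>
      if σ = Equiv.refl (Fin 3) then 1 / 2
      else if σ = ((Equiv.swap 0 1).trans (Equiv.swap 0 2)).symm then 1 / 2 else 0
    let P : Fin 3 → Fin 3 → ℝ := fun i o =>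
      ∑ σ ∈ Finset.univ.filter (fun σ : Equiv.Perm (Fin 3) => σ i = o), w σ
    (∀ σ, 0 ≤ w σ) ∧ (∑ σ : Equiv.Perm (Fin 3), w σ = 1) ∧
      (∀ i i' : Fin 3, i ≠ i' → envyProb 3 rank w i i' ≤ 1 / 2) ∧
      ¬ WeakSDEF 3 rank P := by
  intro rank w P
  have hP : ∀ i o, P i o = ![![1/2, 0, 1/2], ![1/2, 1/2, 0], ![0, 1/2, 1/2]] i o := by
    intro i o
    simp only [P, w, sum_w_eval, Finset.mem_filter, Finset.mem_univ, true_and]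
    fin_cases i <;> fin_cases o <;>
      first
        | (rw [if_pos (by decide), if_pos (by decide)]; norm_num)
        | (rw [if_pos (by decide), if_neg (by decide)]; norm_num)
        | (rw [if_neg (by decide), if_pos (by decide)]; norm_num)
        | (rw [if_neg (by decide), if_neg (by decide)]; norm_num)
  refine ⟨?_, ?_, ?_, ?_⟩
  · intro σ
    simp only [w]
    split_ifs <;> norm_num
  · simp only [w, sum_w_eval, Finset.mem_univ, if_pos]
    norm_num
  · intro i i' hne
    unfold envyProb
    simp only [w, sum_w_eval, Finset.mem_filter, Finset.mem_univ, true_and]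
    fin_cases i <;> fin_cases i' <;>
      first
        | exact absurd rfl hne
        | exact ite_half_le _ _ (by decide)
  · intro hW
    rcases hW 0 1 with h | h
    · have := h 1
      rw [hP 0 1, hP 1 1] at this
      norm_num at this
    · apply h
      intro o
      simp only [Finset.sum_filter, Fin.sum_univ_three, hP]
      fin_cases o <;> simp [rank, Fin.le_def, Fin.ext_iff] <;> norm_num
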